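/- Let σ be a permutation in the symmetric group S_n with disjoint cycle decomposition into nontrivial cycles of lengths ℓ₁,…,ℓ_k (each ℓ_i ≥ 2), let |σ| = Σ_{i=1}^k (ℓ_i − 1) (the minimal number of transpositions whose product is σ), and define the absolute Möbius weight |Moeb(σ)| = Π_{i=1}^k Cat_{ℓ_i − 1}. If |σ| ≥ 1, then 1 ≤ |Moeb(σ)| ≤ Cat_{|σ|} < 4^{|σ|}/(√π · |σ|^{3/2}). Moreover, the lower bound 1 is attained if and only if σ is a product of disjoint transpositions, and the bound |Moeb(σ)| ≤ Cat_{|σ|} is attained if and only if σ is a single cycle of length |σ|+1. -/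

import Mathlib

open scoped Real

/-- The `n`-th Catalan number `Cat_n = (2n)!/(n!(n+1)!)`. -/
def cat (n : ℕ) : ℕ := (2 * n).factorial / (n.factorial * (n + 1).factorial)

/-- `|σ| = Σᵢ (ℓᵢ − 1)`, where `ℓ₁, …, ℓ_k` are the lengths of the nontrivial disjoint
cycles of `σ`; this is the minimal number of transpositions whose product is `σ`. -/
def permLength {n : ℕ} (σ : Equiv.Perm (Fin n)) : ℕ :=
  (σ.cycleType.map fun ℓ => ℓ - 1).sum

/-- The absolute Möbius weight `|Moeb(σ)| = Πᵢ Cat_{ℓᵢ − 1}`, the product over the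
nontrivial disjoint cycles of `σ` of the Catalan numbers of their lengths minus one. -/
def moebAbs {n : ℕ} (σ : Equiv.Perm (Fin n)) : ℕ :=
  (σ.cycleType.map fun ℓ => cat (ℓ - 1)).prod

section Aux

open Finset

lemma catalan_pos' (n : ℕ) : 0 < catalan n := by
  rw [catalan_eq_centralBinom_div]
  exact Nat.div_pos (Nat.le_of_dvd n.centralBinom_pos n.succ_dvd_centralBinom) n.succ_pos

lemma cat_eq_catalan' (n : ℕ) : (2 * n).factorial / (n.factorial * (n + 1).factorial) = catalan n := by
  have h1 : (2 * n).choose n * n.factorial * (2 * n - n).factorial = (2 * n).factorial :=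
    Nat.choose_mul_factorial_mul_factorial (by omega)
  have h2 : (n + 1) * catalan n = (2 * n).choose n := by
    rw [← Nat.centralBinom_eq_two_mul_choose]; exact succ_mul_catalan_eq_centralBinom n
  have h3 : (2 * n).factorial = catalan n * (n.factorial * (n + 1).factorial) := by
    rw [← h1, show 2 * n - n = n from by omega, ← h2, Nat.factorial_succ]; ring
  rw [h3, Nat.mul_div_cancel _ (by positivity)]

lemma catalan_succ'' (n : ℕ) :
    catalan (n + 1) = ∑ i ∈ range (n + 1), catalan i * catalan (n - i) := by
  rw [catalan_succ, ← Fin.sum_univ_eq_sum_range]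

lemma range_to_Ico (m n : ℕ) :
    ∑ i ∈ range (n + 1), catalan (m + i) * catalan (n - i)
      = ∑ j ∈ Finset.Ico m (m + (n + 1)), catalan j * catalan (m + n - j) := by
  rw [Finset.sum_Ico_eq_sum_range, show m + (n + 1) - m = n + 1 from by omega]
  exact Finset.sum_congr rfl fun i hi => by
    simp only [Finset.mem_range] at hi
    congr 2
    omega

lemma catalan_mul_le (m : ℕ) : ∀ n, catalan m * catalan n ≤ catalan (m + n) := by
  intro n
  induction n using Nat.strong_induction_on with
  | _ n ih =>
    match n with
    | 0 => simp
    | Nat.succ n =>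
      rw [catalan_succ'', Finset.mul_sum]
      calc ∑ i ∈ range (n + 1), catalan m * (catalan i * catalan (n - i))
          ≤ ∑ i ∈ range (n + 1), catalan (m + i) * catalan (n - i) := by
            apply Finset.sum_le_sum
            intro i hi
            rw [← mul_assoc]
            exact Nat.mul_le_mul_right _ (ih i (by simpa using hi))
        _ = ∑ j ∈ Finset.Ico m (m + (n + 1)), catalan j * catalan (m + n - j) := range_to_Ico m n
        _ ≤ ∑ j ∈ range (m + n + 1), catalan j * catalan (m + n - j) := by
            apply Finset.sum_le_sum_of_subset
            intro j hj
            simp only [Finset.mem_Ico, Finset.mem_range] at *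
            omega
        _ = catalan (m + (n + 1)) := by rw [show m + (n+1) = (m+n)+1 from by omega, catalan_succ'']

lemma catalan_mul_lt (m n : ℕ) (hm : 1 ≤ m) (hn : 1 ≤ n) :
    catalan m * catalan n < catalan (m + n) := by
  obtain ⟨n, rfl⟩ : ∃ k, n = k + 1 := ⟨n - 1, by omega⟩
  have h1 : catalan m * catalan (n + 1) ≤
      ∑ j ∈ Finset.Ico m (m + (n + 1)), catalan j * catalan (m + n - j) := by
    rw [catalan_succ'', Finset.mul_sum, ← range_to_Ico m n]
    apply Finset.sum_le_sum
    intro i hi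
    rw [← mul_assoc]
    exact Nat.mul_le_mul_right _ (catalan_mul_le m i)
  have h2 : ∑ j ∈ Finset.Ico m (m + (n + 1)), catalan j * catalan (m + n - j)
      < ∑ j ∈ range (m + n + 1), catalan j * catalan (m + n - j) := by
    refine Finset.sum_lt_sum_of_subset (f := fun j => catalan j * catalan (m + n - j))
      (i := 0) ?_ ?_ ?_ ?_ ?_
    · intro j hj; simp only [Finset.mem_Ico, Finset.mem_range] at *; omega
    · simp
    · simp only [Finset.mem_Ico]; omega
    · exact Nat.mul_pos (catalan_pos' 0) (catalan_pos' _)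
    · exact fun j _ _ => Nat.zero_le _
  have h3 : catalan (m + (n + 1)) = ∑ j ∈ range (m + n + 1), catalan j * catalan (m + n - j) := by
    rw [show m + (n+1) = (m+n)+1 from by omega, catalan_succ'']
  omega
lemma catalan_pos'' (n : ℕ) : 0 < catalan n := by
  rw [catalan_eq_centralBinom_div]
  exact Nat.div_pos (Nat.le_of_dvd n.centralBinom_pos n.succ_dvd_centralBinom) n.succ_pos

lemma sqrt_pi_le_stirling {n : ℕ} (hn : 1 ≤ n) : Real.sqrt π ≤ Stirling.stirlingSeq n := by
  obtain ⟨m, rfl⟩ : ∃ m, n = m + 1 := ⟨n - 1, by omega⟩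
  have ht : Filter.Tendsto (Stirling.stirlingSeq ∘ Nat.succ) Filter.atTop (nhds (Real.sqrt π)) :=
    Stirling.tendsto_stirlingSeq_sqrt_pi.comp (Filter.tendsto_add_atTop_nat 1)
  exact Stirling.stirlingSeq'_antitone.le_of_tendsto ht m

lemma stirling_2m_le (m : ℕ) (hm : 1 ≤ m) :
    Stirling.stirlingSeq (2 * m) ≤ Stirling.stirlingSeq m := by
  have h := Stirling.stirlingSeq'_antitone (show m - 1 ≤ 2 * m - 1 by omega)
  simpa only [Function.comp, Nat.succ_eq_add_one, show m - 1 + 1 = m by omega,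
    show 2 * m - 1 + 1 = 2 * m by omega] using h

lemma stirling_identity (m : ℕ) (hm : 1 ≤ m) :
    Stirling.stirlingSeq (2 * m) * 4 ^ m
      = (Nat.centralBinom m : ℝ) * Real.sqrt m * Stirling.stirlingSeq m ^ 2 := by
  have hm0 : (0:ℝ) < (m:ℝ) := by exact_mod_cast hm
  have hsm : (0:ℝ) < Real.sqrt m := Real.sqrt_pos.mpr hm0
  have hsq : Real.sqrt m * Real.sqrt m = (m:ℝ) := Real.mul_self_sqrt hm0.le
  have he : (0:ℝ) < Real.exp 1 := Real.exp_pos 1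
  have hfact : ((2 * m).factorial : ℝ)
      = (Nat.centralBinom m : ℝ) * ((m.factorial : ℝ) * m.factorial) := by
    have h := Nat.choose_mul_factorial_mul_factorial (show m ≤ 2 * m by omega)
    rw [show 2 * m - m = m from by omega] at h
    rw [Nat.centralBinom_eq_two_mul_choose]
    exact_mod_cast (by rw [← h]; ring :
      (2 * m).factorial = (2 * m).choose m * (m.factorial * m.factorial))
  unfold Stirling.stirlingSeq
  rw [hfact]
  have hcast : ((2 * m : ℕ) : ℝ) = 2 * (m:ℝ) := by push_cast; ring
  rw [hcast]
  have hs4 : Real.sqrt (2 * (2 * (m:ℝ))) = 2 * Real.sqrt m := by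
    rw [show (2:ℝ) * (2 * (m:ℝ)) = 2 ^ 2 * m by ring, Real.sqrt_mul (by positivity),
      Real.sqrt_sq (by norm_num)]
  rw [hs4]
  have hpow : ((2 * (m:ℝ)) / Real.exp 1) ^ (2 * m) = 4 ^ m * (((m:ℝ) / Real.exp 1) ^ m) ^ 2 := by
    rw [show (2 * (m:ℝ)) / Real.exp 1 = 2 * ((m:ℝ) / Real.exp 1) by ring, mul_pow,
      pow_mul 2 2 m, mul_comm 2 m, pow_mul]
    norm_num
  rw [hpow]
  field_simp
  have e1 : (Real.sqrt 2 * Real.sqrt (m:ℝ) * (m:ℝ) ^ m) ^ 2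
      = 2 * (m:ℝ) * ((m:ℝ) ^ m) ^ 2 := by
    rw [mul_pow, mul_pow, Real.sq_sqrt (by norm_num : (0:ℝ) ≤ 2), Real.sq_sqrt hm0.le]
  rw [Real.sq_sqrt (by positivity : (0:ℝ) ≤ 2 * (m:ℝ))]
  ring_nf
  rw [Real.sq_sqrt hm0.le]

lemma centralBinom_bound (m : ℕ) (hm : 1 ≤ m) :
    (Nat.centralBinom m : ℝ) * (Real.sqrt π * Real.sqrt m) ≤ 4 ^ m := by
  have hπ : (0:ℝ) < Real.sqrt π := Real.sqrt_pos.mpr Real.pi_pos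
  have hs2m : Real.sqrt π ≤ Stirling.stirlingSeq (2 * m) := sqrt_pi_le_stirling (by omega)
  have hmono : Stirling.stirlingSeq (2 * m) ≤ Stirling.stirlingSeq m := stirling_2m_le m hm
  have hpos : (0:ℝ) < Stirling.stirlingSeq m :=
    lt_of_lt_of_le hπ (le_trans hs2m hmono)
  have key := stirling_identity m hm
  have h : Real.sqrt π * Stirling.stirlingSeq (2 * m) ≤ Stirling.stirlingSeq m ^ 2 := by
    nlinarith [hs2m, hmono, hπ]
  have h3 : Stirling.stirlingSeq m ^ 2 * ((Nat.centralBinom m : ℝ) * (Real.sqrt π * Real.sqrt m))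
      ≤ Stirling.stirlingSeq m ^ 2 * 4 ^ m := by
    have h4 : (0:ℝ) < (4:ℝ) ^ m := by positivity
    nlinarith [mul_le_mul_of_nonneg_right h (le_of_lt h4), key]
  exact le_of_mul_le_mul_left h3 (by positivity)

lemma catalan_lt_bound (L : ℕ) (hL : 1 ≤ L) :
    (catalan L : ℝ) < 4 ^ L / (Real.sqrt π * (L:ℝ) ^ ((3:ℝ)/2)) := by
  have hL0 : (0:ℝ) < (L:ℝ) := by exact_mod_cast hL
  have hπ : (0:ℝ) < Real.sqrt π := Real.sqrt_pos.mpr Real.pi_pos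
  have hsL : (0:ℝ) < Real.sqrt L := Real.sqrt_pos.mpr hL0
  have hrpow : (L:ℝ) ^ ((3:ℝ)/2) = (L:ℝ) * Real.sqrt L := by
    rw [show (3:ℝ)/2 = 1 + 1/2 by norm_num, Real.rpow_add hL0, Real.rpow_one,
      ← Real.sqrt_eq_rpow]
  have hCB : (catalan L : ℝ) * ((L:ℝ) + 1) = (Nat.centralBinom L : ℝ) := by
    have h := succ_mul_catalan_eq_centralBinom L
    have h' : (((L + 1) * catalan L : ℕ) : ℝ) = (Nat.centralBinom L : ℝ) := by rw [h]
    push_cast at h'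
    linarith [h']
  have hb := centralBinom_bound L hL
  rw [lt_div_iff₀ (by rw [hrpow]; positivity), hrpow]
  have hcatpos : (0:ℝ) < (catalan L : ℝ) := by exact_mod_cast catalan_pos'' L
  have hq : (0:ℝ) < (catalan L : ℝ) * (Real.sqrt π * Real.sqrt L) := by positivity
  nlinarith [hCB, hb, hq, hcatpos]

lemma cat_eq_catalan (n : ℕ) : cat n = catalan n := cat_eq_catalan' n

lemma two_le_catalan {m : ℕ} (hm : 2 ≤ m) : 2 ≤ catalan m := by
  have h := catalan_mul_le 2 (m - 2)
  rw [show 2 + (m - 2) = m from by omega] at h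
  have h2 : catalan 2 = 2 := by simp [catalan_succ'', Finset.sum_range_succ]
  have h3 := catalan_pos' (m - 2)
  calc 2 = 2 * 1 := by ring
    _ ≤ catalan 2 * catalan (m - 2) := by rw [h2]; exact Nat.mul_le_mul_left 2 h3
    _ ≤ catalan m := h

lemma prod_catalan_le (s : Multiset ℕ) : (s.map catalan).prod ≤ catalan s.sum := by
  induction s using Multiset.induction with
  | empty => simp
  | cons a s ih =>
    simp only [Multiset.map_cons, Multiset.prod_cons, Multiset.sum_cons]
    calc catalan a * (s.map catalan).prod ≤ catalan a * catalan s.sum :=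
          Nat.mul_le_mul_left _ ih
      _ ≤ catalan (a + s.sum) := catalan_mul_le a s.sum

lemma prod_catalan_lt (a : ℕ) (t : Multiset ℕ) (ha : 1 ≤ a) (ht : t ≠ 0)
    (h : ∀ x ∈ t, 1 ≤ x) :
    ((a ::ₘ t).map catalan).prod < catalan (a ::ₘ t).sum := by
  simp only [Multiset.map_cons, Multiset.prod_cons, Multiset.sum_cons]
  have htsum : 1 ≤ t.sum := by
    obtain ⟨b, hb⟩ := Multiset.exists_mem_of_ne_zero ht
    exact le_trans (h b hb) (Multiset.le_sum_of_mem hb)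
  calc catalan a * (t.map catalan).prod ≤ catalan a * catalan t.sum :=
        Nat.mul_le_mul_left _ (prod_catalan_le t)
    _ < catalan (a + t.sum) := catalan_mul_lt a t.sum ha htsum

end Aux

/-- If `|σ| ≥ 1` then `1 ≤ |Moeb(σ)| ≤ Cat_{|σ|} < 4^{|σ|}/(√π |σ|^{3/2})`; the lower bound
is attained iff `σ` is a product of disjoint transpositions (all cycle lengths equal `2`),
and `|Moeb(σ)| = Cat_{|σ|}` iff `σ` is a single cycle of length `|σ| + 1`. -/
theorem moebius_bounds {n : ℕ} (σ : Equiv.Perm (Fin n)) (hσ : 1 ≤ permLength σ) :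
    1 ≤ moebAbs σ
    ∧ moebAbs σ ≤ cat (permLength σ)
    ∧ (cat (permLength σ) : ℝ)
        < 4 ^ permLength σ / (Real.sqrt π * (permLength σ : ℝ) ^ ((3 : ℝ) / 2))
    ∧ (moebAbs σ = 1 ↔ ∀ ℓ ∈ σ.cycleType, ℓ = 2)
    ∧ (moebAbs σ = cat (permLength σ) ↔ σ.cycleType = {permLength σ + 1}) := by
  have hs2 : ∀ ℓ ∈ σ.cycleType, 2 ≤ ℓ := fun ℓ h => σ.two_le_of_mem_cycleType h
  have hmoeb : moebAbs σ = ((σ.cycleType.map (fun ℓ => ℓ - 1)).map catalan).prod := by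
    simp only [moebAbs, Multiset.map_map, Function.comp, cat_eq_catalan]
  have hlen : permLength σ = (σ.cycleType.map (fun ℓ => ℓ - 1)).sum := rfl
  have h1 : 1 ≤ moebAbs σ := by
    rw [hmoeb]
    have hp : 0 < ((σ.cycleType.map (fun ℓ => ℓ - 1)).map catalan).prod := by
      refine Multiset.prod_pos ?_
      intro x hx
      obtain ⟨a, _, rfl⟩ := Multiset.mem_map.mp hx
      exact catalan_pos' a
    omega
  have h2 : moebAbs σ ≤ cat (permLength σ) := by
    rw [hmoeb, cat_eq_catalan, hlen]
    exact prod_catalan_le _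
  refine ⟨h1, h2, ?_, ?_, ?_⟩
  · rw [cat_eq_catalan]
    exact catalan_lt_bound _ hσ
  · constructor
    · intro h ℓ hℓ
      have hmem : cat (ℓ - 1) ∈ σ.cycleType.map (fun ℓ => cat (ℓ - 1)) :=
        Multiset.mem_map_of_mem _ hℓ
      have hdvd : cat (ℓ - 1) ∣ moebAbs σ := Multiset.dvd_prod hmem
      rw [h] at hdvd
      have hone : cat (ℓ - 1) = 1 := Nat.eq_one_of_dvd_one hdvd
      by_contra hne
      have h3 : 3 ≤ ℓ := by have := hs2 ℓ hℓ; omega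
      have : 2 ≤ cat (ℓ - 1) := by rw [cat_eq_catalan]; exact two_le_catalan (by omega)
      omega
    · intro h
      refine Multiset.prod_eq_one (fun x hx => ?_)
      obtain ⟨ℓ, hℓ, rfl⟩ := Multiset.mem_map.mp hx
      rw [h ℓ hℓ]
      decide
  · constructor
    · intro h
      by_cases h0 : σ.cycleType = 0
      · exfalso
        rw [hlen, h0] at hσ
        simp at hσ
      obtain ⟨a, ha⟩ := Multiset.exists_mem_of_ne_zero h0
      obtain ⟨t, hst⟩ := Multiset.exists_cons_of_mem ha
      have ha2 : 2 ≤ a := hs2 a ha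
      by_cases ht : t = 0
      · rw [ht] at hst
        have hL : permLength σ = a - 1 := by
          rw [hlen, hst]; simp
        rw [hst, hL, show a - 1 + 1 = a from by omega]
        simp
      · exfalso
        have hlt : moebAbs σ < cat (permLength σ) := by
          rw [hmoeb, cat_eq_catalan, hlen, hst,
            Multiset.map_cons (fun ℓ => ℓ - 1) a t]
          refine prod_catalan_lt (a - 1) (t.map (fun ℓ => ℓ - 1)) (by omega)
            (by simpa [Multiset.map_eq_zero] using ht) ?_
          intro x hx
          obtain ⟨b, hb, rfl⟩ := Multiset.mem_map.mp hx
          have : 2 ≤ b := hs2 b (by rw [hst]; exact Multiset.mem_cons_of_mem hb)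
          omega
        omega
    · intro h
      have hL : permLength σ + 1 - 1 = permLength σ := by omega
      rw [moebAbs, h]
      simp [hL]
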